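/- Let G = ⟨a, b ∣ a b a⁻¹ b = 1⟩ be the Klein bottle group (the fundamental group of the Klein bottle). Then r(G) ≤ 1 and rank(G) = 2; in particular r(G) < rank(G). -/

import Mathlib

open scoped Pointwise

/-- `algA G i` is the set of elements of `G` whose centralizer contains a
free abelian subgroup of rank at most `i` as a subgroup of finite index. -/
def algA (G : Type*) [Group G] (i : ℕ) : Set G :=
  {g : G | ∃ H : Subgroup (Subgroup.centralizer ({g} : Set G)),
    H.FiniteIndex ∧ ∃ n : ℕ, n ≤ i ∧ Nonempty (H ≃* Multiplicative (Fin n → ℤ))}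

/-- `G` is covered by finitely many left translates of `algA G i`. -/
def algCovers (G : Type*) [Group G] (i : ℕ) : Prop :=
  ∃ F : Finset G, (⋃ g ∈ F, g • algA G i) = Set.univ

/-- `r(G)`: the least `i` such that `G` is a finite union of translates of `algA G i`
(`⊤` if there is no such `i`). -/
noncomputable def algr (G : Type*) [Group G] : ℕ∞ :=
  sInf {n : ℕ∞ | ∃ i : ℕ, n = (i : ℕ∞) ∧ algCovers G i}

/-- The algebraic rank of `G`: the supremum of `r(G*)` over all finite index
subgroups `G*` of `G`. -/
noncomputable def algRank (G : Type*) [Group G] : ℕ∞ :=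
  ⨆ (H : Subgroup G) (_ : H.FiniteIndex), algr H

/-- The Klein bottle group `⟨a, b ∣ a b a⁻¹ b = 1⟩`, presented with two generators
(`0` playing the role of `a` and `1` that of `b`) and the single relator `a b a⁻¹ b`. -/
def kleinBottleRels : Set (FreeGroup (Fin 2)) :=
  {FreeGroup.of 0 * FreeGroup.of 1 * (FreeGroup.of 0)⁻¹ * FreeGroup.of 1}

/-- The Klein bottle group. -/
def KleinBottleGroup : Type := PresentedGroup kleinBottleRels

instance : Group KleinBottleGroup :=
  inferInstanceAs (Group (PresentedGroup kleinBottleRels))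

theorem embeds_free_rank_two {A : Type*} [Group A] (f : A →* Multiplicative (Fin 2 → ℤ))
    (hf : Function.Injective f) :
    ∃ n : ℕ, n ≤ 2 ∧ Nonempty (A ≃* Multiplicative (Fin n → ℤ)) := by
  classical
  set S : Submodule ℤ (Fin 2 → ℤ) :=
    { carrier := {v | Multiplicative.ofAdd v ∈ f.range}
      add_mem' := fun {a b} ha hb => by
        have := f.range.mul_mem ha hb; exact this
      zero_mem' := by exact one_mem f.range
      smul_mem' := fun c v hv => by
        have := f.range.zpow_mem hv c
        exact this } with hS
  haveI : Module.Finite ℤ S := Module.Finite.of_injective S.subtype Subtype.coe_injective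
  haveI : Module.IsTorsionFree ℤ S := by infer_instance
  haveI : Module.Free ℤ S := Module.free_of_finite_type_torsion_free'
  set n := Module.finrank ℤ S with hn
  have hle : n ≤ 2 := by
    have h1 : Module.finrank ℤ S ≤ Module.finrank ℤ (Fin 2 → ℤ) := S.finrank_le
    simpa [Module.finrank_pi] using h1
  have e1 : A ≃* f.range := MonoidHom.ofInjective hf
  have e2 : (↥f.range) ≃* Multiplicative ↥S :=
  { toFun := fun x => Multiplicative.ofAdd (⟨(x : Multiplicative (Fin 2 → ℤ)).toAdd, x.2⟩ : S)
    invFun := fun v => ⟨Multiplicative.ofAdd ((v.toAdd : Fin 2 → ℤ)), v.toAdd.2⟩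
    left_inv := fun _ => rfl
    right_inv := fun _ => rfl
    map_mul' := fun _ _ => rfl }
  have e3 : S ≃ₗ[ℤ] (Fin n → ℤ) := (Module.finBasis ℤ S).equivFun
  exact ⟨n, hle, ⟨e1.trans (e2.trans (AddEquiv.toMultiplicative e3.toAddEquiv))⟩⟩

theorem algA_two_eq_univ {G : Type*} [Group G] (B : Subgroup G) [B.FiniteIndex]
    (f : ↥B →* Multiplicative (Fin 2 → ℤ)) (hf : Function.Injective f) :
    algA G 2 = Set.univ := by
  ext g
  simp only [Set.mem_univ, iff_true]
  set C : Subgroup G := Subgroup.centralizer ({g} : Set G) with hC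
  refine ⟨B.subgroupOf C, inferInstance, ?_⟩
  let emb : ↥(B.subgroupOf C) →* ↥B :=
    { toFun := fun x => ⟨((x : ↥C) : G), x.2⟩
      map_one' := rfl
      map_mul' := fun _ _ => rfl }
  exact embeds_free_rank_two (f.comp emb)
    (hf.comp (fun x y h => by
      have : (((x : ↥C) : G)) = (((y : ↥C) : G)) := congrArg (fun z : ↥B => (z : G)) h
      apply Subtype.ext; apply Subtype.ext; exact this))

theorem algCovers_of_univ {G : Type*} [Group G] {i : ℕ} (h : algA G i = Set.univ) :
    algCovers G i := by
  refine ⟨{1}, ?_⟩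
  simp [h]

theorem algr_le_two {G : Type*} [Group G] (B : Subgroup G) [B.FiniteIndex]
    (f : ↥B →* Multiplicative (Fin 2 → ℤ)) (hf : Function.Injective f) :
    algr G ≤ 2 := by
  apply sInf_le
  exact ⟨2, by norm_num, algCovers_of_univ (algA_two_eq_univ B f hf)⟩

theorem algA_mono {G : Type*} [Group G] {i j : ℕ} (h : i ≤ j) : algA G i ⊆ algA G j := by
  rintro g ⟨H, hH, n, hn, hiso⟩
  exact ⟨H, hH, n, hn.trans h, hiso⟩

theorem no_small_subgroup {Γ : Type*} [Group Γ] (eΓ : Γ ≃* Multiplicative (Fin 2 → ℤ))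
    (S : Subgroup Γ) (hfin : S.FiniteIndex) {n : ℕ} (hn : n ≤ 1)
    (ι : ↥S ≃* Multiplicative (Fin n → ℤ)) : False := by
  have comm : ∀ x y : Γ, x * y = y * x := fun x y =>
    eΓ.injective (by rw [map_mul, map_mul, mul_comm])
  haveI : S.Normal := ⟨fun s hs g => by rw [comm g s, mul_assoc, mul_inv_cancel, mul_one]; exact hs⟩
  set k := S.index with hk
  have hk0 : k ≠ 0 := hfin.index_ne_zero
  have hpow : ∀ g : Γ, g ^ k ∈ S := S.pow_index_mem
  obtain ⟨s, hs⟩ : ∃ s : Γ, ∀ y : Γ, y ∈ S → ∃ j : ℤ, y = s ^ j := by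
    match n, hn with
    | 0, _ =>
      refine ⟨1, fun y hy => ⟨0, ?_⟩⟩
      have : (⟨y, hy⟩ : ↥S) = 1 := ι.injective (Subsingleton.elim _ _)
      simpa using congrArg (fun z : ↥S => (z : Γ)) this
    | 1, _ =>
      refine ⟨(ι.symm (Multiplicative.ofAdd 1) : ↥S), fun y hy => ?_⟩
      refine ⟨Multiplicative.toAdd (ι ⟨y, hy⟩) 0, ?_⟩
      have : (⟨y, hy⟩ : ↥S) = (ι.symm (Multiplicative.ofAdd 1)) ^ (Multiplicative.toAdd (ι ⟨y, hy⟩) 0) := by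
        apply ι.injective
        rw [map_zpow, MulEquiv.apply_symm_apply]
        apply Multiplicative.toAdd.injective
        funext i
        have : i = 0 := Subsingleton.elim _ _
        subst this
        simp
      simpa using congrArg (fun z : ↥S => (z : Γ)) this
  obtain ⟨α, hα⟩ := hs _ (hpow (eΓ.symm (Multiplicative.ofAdd (Pi.single 0 1))))
  obtain ⟨β, hβ⟩ := hs _ (hpow (eΓ.symm (Multiplicative.ofAdd (Pi.single 1 1))))
  set u : Γ := eΓ.symm (Multiplicative.ofAdd (Pi.single 0 1)) with hu
  set v : Γ := eΓ.symm (Multiplicative.ofAdd (Pi.single 1 1)) with hv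
  have h1 : (u ^ k) ^ β = (v ^ k) ^ α := by
    rw [hα, hβ, ← zpow_mul, ← zpow_mul, mul_comm]
  have h2 : ((k : ℤ) * β) • (Pi.single 0 1 : Fin 2 → ℤ) = ((k : ℤ) * α) • (Pi.single 1 1 : Fin 2 → ℤ) := by
    have := congrArg (fun z => Multiplicative.toAdd (eΓ z)) h1
    simp only [← zpow_natCast, ← zpow_mul, map_zpow, hu, hv, MulEquiv.apply_symm_apply,
      toAdd_zpow, toAdd_ofAdd] at this
    exact this
  have hkZ : (k : ℤ) ≠ 0 := Int.natCast_ne_zero.2 hk0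
  have hβ0 : β = 0 := by
    have h := congrFun h2 0
    rw [Pi.smul_apply, Pi.smul_apply, Pi.single_eq_same, Pi.single_eq_of_ne (by decide),
      smul_eq_mul, smul_eq_mul, mul_one, mul_zero] at h
    exact (mul_eq_zero.mp h).resolve_left hkZ
  have hα0 : α = 0 := by
    have h := congrFun h2 1
    rw [Pi.smul_apply, Pi.smul_apply, Pi.single_eq_same, Pi.single_eq_of_ne (by decide),
      smul_eq_mul, smul_eq_mul, mul_one, mul_zero] at h
    exact (mul_eq_zero.mp h.symm).resolve_left hkZ
  rw [hα0, zpow_zero] at hα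
  have h3 : (k : ℤ) • (Pi.single 0 1 : Fin 2 → ℤ) = 0 := by
    have := congrArg (fun z => Multiplicative.toAdd (eΓ z)) hα
    simpa only [← zpow_natCast, map_zpow, hu, MulEquiv.apply_symm_apply, toAdd_zpow,
      toAdd_ofAdd, map_one, toAdd_one] using this
  have h4 := congrFun h3 0
  rw [Pi.smul_apply, Pi.single_eq_same, smul_eq_mul, mul_one] at h4
  exact hkZ (by simpa using h4)

theorem algA_one_empty {Γ : Type*} [Group Γ] (eΓ : Γ ≃* Multiplicative (Fin 2 → ℤ)) :
    algA Γ 1 = ∅ := by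
  have comm : ∀ x y : Γ, x * y = y * x := fun x y =>
    eΓ.injective (by rw [map_mul, map_mul, mul_comm])
  ext g
  simp only [Set.mem_empty_iff_false, iff_false]
  rintro ⟨H, hH, n, hn, ⟨ι⟩⟩
  have hCtop : Subgroup.centralizer ({g} : Set Γ) = ⊤ := by
    ext x
    simp only [Subgroup.mem_top, iff_true, Subgroup.mem_centralizer_iff]
    rintro y hy
    exact comm y x
  have hsurj : Function.Surjective (Subgroup.centralizer ({g} : Set Γ)).subtype :=
    fun x => ⟨⟨x, hCtop ▸ Subgroup.mem_top x⟩, rfl⟩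
  have hinj : Function.Injective (Subgroup.centralizer ({g} : Set Γ)).subtype :=
    Subgroup.subtype_injective _
  have hidx : (H.map (Subgroup.centralizer ({g} : Set Γ)).subtype).index = H.index :=
    Subgroup.index_map_eq H hsurj (by rw [Subgroup.ker_subtype]; exact bot_le)
  have hfinS : (H.map (Subgroup.centralizer ({g} : Set Γ)).subtype).FiniteIndex :=
    ⟨by rw [hidx]; exact hH.index_ne_zero⟩
  exact no_small_subgroup eΓ _ hfinS hn
    (((H.equivMapOfInjective (Subgroup.centralizer ({g} : Set Γ)).subtype hinj).symm).trans ι)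

theorem algr_eq_two {Γ : Type*} [Group Γ] (eΓ : Γ ≃* Multiplicative (Fin 2 → ℤ)) :
    algr Γ = 2 := by
  have comm : ∀ x y : Γ, x * y = y * x := fun x y =>
    eΓ.injective (by rw [map_mul, map_mul, mul_comm])
  apply le_antisymm
  · exact algr_le_two ⊤ (eΓ.toMonoidHom.comp (Subgroup.subtype ⊤))
      (eΓ.injective.comp (Subgroup.subtype_injective ⊤))
  · apply le_sInf
    rintro m ⟨i, rfl, F, hF⟩
    by_contra hlt
    push_neg at hlt
    have hi1 : i ≤ 1 := by
      have h2 : i < 2 := by exact_mod_cast hlt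
      omega
    have hempty : algA Γ i = ∅ :=
      Set.subset_empty_iff.mp ((algA_mono hi1).trans (algA_one_empty eΓ).subset)
    rw [hempty] at hF
    simp only [Set.smul_set_empty, Set.iUnion_empty] at hF
    exact (Set.empty_ne_univ : (∅ : Set Γ) ≠ Set.univ) (by simpa using hF)

theorem algA_mem_of_equiv {G G' : Type*} [Group G] [Group G'] (e : G ≃* G') {i : ℕ} {g : G}
    (hg : g ∈ algA G i) : e g ∈ algA G' i := by
  obtain ⟨H, hH, n, hn, ⟨ι⟩⟩ := hg
  have hmap : (Subgroup.centralizer ({g} : Set G)).map e.toMonoidHom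
      = Subgroup.centralizer ({e g} : Set G') := by
    ext x
    rw [Subgroup.mem_map]
    constructor
    · rintro ⟨y, hy, rfl⟩
      rw [Subgroup.mem_centralizer_iff]
      intro h hh
      rw [Set.mem_singleton_iff] at hh
      subst hh
      have hc := (Subgroup.mem_centralizer_iff.mp hy) g rfl
      show e g * e y = e y * e g
      rw [← map_mul, ← map_mul, hc]
    · intro hx
      refine ⟨e.symm x, ?_, e.apply_symm_apply x⟩
      rw [Subgroup.mem_centralizer_iff]
      intro h hh
      rw [Set.mem_singleton_iff] at hh
      rw [hh]
      have hc := (Subgroup.mem_centralizer_iff.mp hx) (e g) rfl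
      apply e.injective
      rw [map_mul, map_mul, e.apply_symm_apply, hc]
  let cmap := (e.subgroupMap (Subgroup.centralizer ({g} : Set G))).trans
    (MulEquiv.subgroupCongr hmap)
  have hidx : (H.map cmap.toMonoidHom).index = H.index :=
    Subgroup.index_map_eq H cmap.surjective
      (by rw [(MonoidHom.ker_eq_bot_iff _).mpr cmap.injective]; exact bot_le)
  exact ⟨H.map cmap.toMonoidHom, ⟨by rw [hidx]; exact hH.index_ne_zero⟩, n, hn,
    ⟨((H.equivMapOfInjective cmap.toMonoidHom cmap.injective).symm).trans ι⟩⟩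

theorem algCovers_of_equiv {G G' : Type*} [Group G] [Group G'] (e : G ≃* G') {i : ℕ}
    (h : algCovers G i) : algCovers G' i := by
  classical
  obtain ⟨F, hF⟩ := h
  refine ⟨F.image e, ?_⟩
  ext x
  simp only [Set.mem_univ, iff_true]
  have hx : e.symm x ∈ ⋃ g ∈ F, g • algA G i := hF ▸ Set.mem_univ _
  rw [Set.mem_iUnion₂] at hx
  obtain ⟨g, hgF, hmem⟩ := hx
  rw [Set.mem_smul_set] at hmem
  obtain ⟨y, hy, hgy⟩ := hmem
  rw [Set.mem_iUnion₂]
  refine ⟨e g, Finset.mem_image_of_mem e hgF, ?_⟩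
  rw [Set.mem_smul_set]
  refine ⟨e y, algA_mem_of_equiv e hy, ?_⟩
  show e g * e y = x
  rw [← map_mul]
  have : g * y = e.symm x := hgy
  rw [this, e.apply_symm_apply]

def kerCompEquiv {G G' M : Type*} [Group G] [Group G'] [Group M] (e : G ≃* G') (f : G' →* M) :
    ↥((f.comp e.toMonoidHom).ker) ≃* ↥f.ker where
  toFun x := ⟨e x, x.2⟩
  invFun y := ⟨e.symm y, by
    show f (e (e.symm y)) = 1
    rw [e.apply_symm_apply]
    exact y.2⟩
  left_inv x := Subtype.ext (e.symm_apply_apply x)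
  right_inv y := Subtype.ext (e.apply_symm_apply y)
  map_mul' a b := Subtype.ext (map_mul e (a : G) (b : G))


def subgroupOfHom {G : Type*} [Group G] (B H : Subgroup G) : ↥(B.subgroupOf H) →* ↥B where
  toFun x := ⟨((x : ↥H) : G), x.2⟩
  map_one' := rfl
  map_mul' _ _ := rfl

lemma subgroupOfHom_injective {G : Type*} [Group G] (B H : Subgroup G) :
    Function.Injective (subgroupOfHom B H) := fun x y h => by
  apply Subtype.ext
  apply Subtype.ext
  exact congrArg (fun z : ↥B => (z : G)) h

open Multiplicative

abbrev Mz : Type := Multiplicative ℤ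

def negAut : MulAut Mz where
  toFun x := x⁻¹
  invFun x := x⁻¹
  left_inv := inv_inv
  right_inv := inv_inv
  map_mul' a b := mul_inv a b

def kphi : Mz →* MulAut Mz := zpowersHom _ negAut

lemma negAut_sq : negAut ^ (2:ℤ) = 1 := by
  ext x
  show negAut (negAut x) = x
  simp [negAut]

lemma kphi_even {m : ℤ} (h : Even m) : kphi (ofAdd m) = 1 := by
  obtain ⟨k, rfl⟩ := h
  show negAut ^ (k + k) = 1
  rw [← two_mul, zpow_mul, negAut_sq, one_zpow]

lemma kphi_odd {m : ℤ} (h : Odd m) : kphi (ofAdd m) = negAut := by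
  obtain ⟨k, rfl⟩ := h
  show negAut ^ (2 * k + 1) = negAut
  rw [zpow_add, zpow_mul, negAut_sq, one_zpow, one_mul, zpow_one]

abbrev K' : Type := SemidirectProduct Mz Mz kphi

lemma kphi_apply_even {m : ℤ} (h : Even m) (z : Mz) : kphi (ofAdd m) z = z := by
  rw [kphi_even h]; rfl

lemma kphi_apply_odd {m : ℤ} (h : Odd m) (z : Mz) : kphi (ofAdd m) z = z⁻¹ := by
  rw [kphi_odd h]; rfl

/-- the element (x, 1) -/
def tt (x : ℤ) : K' := ⟨ofAdd x, ofAdd 1⟩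

lemma ofAdd_surj (z : Mz) : z = ofAdd (toAdd z) := rfl

lemma tt_inv (x : ℤ) : (tt x)⁻¹ = ⟨ofAdd x, ofAdd (-1)⟩ := by
  ext
  · show kphi (ofAdd (1:ℤ))⁻¹ (ofAdd x)⁻¹ = ofAdd x
    rw [← ofAdd_neg, kphi_apply_odd (by decide), ← ofAdd_neg, ← ofAdd_neg, neg_neg]
  · rfl

lemma tt_zpow (x : ℤ) (j : ℤ) :
    (tt x) ^ j = ⟨ofAdd (if Even j then 0 else x), ofAdd j⟩ := by
  induction j using Int.induction_on with
  | zero => simp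
  | succ n ih =>
    rw [zpow_add, zpow_one, ih]
    ext
    · show (ofAdd (if Even (n:ℤ) then 0 else x)) * kphi (ofAdd (n:ℤ)) (ofAdd x) = _
      rcases Int.even_or_odd (n:ℤ) with he | ho
      · have h1 : ¬ Even ((n:ℤ)+1) := by rw [Int.even_add_one, not_not]; exact he
        rw [kphi_apply_even he, if_pos he, if_neg h1]
        rw [← ofAdd_add, zero_add]
        rfl
      · have h0 : ¬ Even (n:ℤ) := Int.not_even_iff_odd.mpr ho
        have h1 : Even ((n:ℤ)+1) := Int.even_add_one.mpr h0
        rw [kphi_apply_odd ho, if_neg h0, if_pos h1]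
        exact mul_inv_cancel _
    · show ofAdd (n:ℤ) * ofAdd 1 = ofAdd ((n:ℤ)+1)
      rw [← ofAdd_add]
  | pred n ih =>
    rw [zpow_sub_one, ih, tt_inv]
    ext
    · show (ofAdd (if Even (-(n:ℤ)) then 0 else x)) * kphi (ofAdd (-(n:ℤ))) (ofAdd x) = _
      rcases Int.even_or_odd (-(n:ℤ)) with he | ho
      · have h1 : ¬ Even (-(n:ℤ)-1) := by
          rw [Int.even_sub_one]
          simpa using he
        rw [kphi_apply_even he, if_pos he, if_neg h1]
        rw [← ofAdd_add, zero_add]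
        rfl
      · have h0 : ¬ Even (-(n:ℤ)) := Int.not_even_iff_odd.mpr ho
        have h1 : Even (-(n:ℤ)-1) := Int.even_sub_one.mpr h0
        rw [kphi_apply_odd ho, if_neg h0, if_pos h1]
        exact mul_inv_cancel _
    · show ofAdd (-(n:ℤ)) * ofAdd (-1) = ofAdd (-(n:ℤ)-1)
      rw [← ofAdd_add]
      norm_num
      rfl

lemma mz_comm (a b : Mz) : a * b = b * a := mul_comm a b

lemma centralizer_odd (g : K') (h : Odd (toAdd g.right)) :
    Subgroup.centralizer ({g} : Set K') = Subgroup.zpowers (tt (toAdd g.left)) := by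
  apply le_antisymm
  · intro x hx
    have hcomm : g * x = x * g := (Subgroup.mem_centralizer_iff.mp hx) g rfl
    have hleft := congrArg SemidirectProduct.left hcomm
    simp only [SemidirectProduct.mul_left] at hleft
    have hg : kphi g.right x.left = (x.left)⁻¹ := kphi_apply_odd h x.left
    rw [hg] at hleft
    -- hleft : g.left * x.left⁻¹ = x.left * kphi x.right g.left
    rcases Int.even_or_odd (toAdd x.right) with he | ho
    · have hx2 : kphi x.right g.left = g.left := kphi_apply_even he g.left
      rw [hx2] at hleft
      have hadd := congrArg toAdd hleft
      simp only [toAdd_mul, toAdd_inv] at hadd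
      have hxl : toAdd x.left = 0 := by omega
      refine ⟨toAdd x.right, ?_⟩
      show tt (toAdd g.left) ^ (toAdd x.right) = x
      rw [tt_zpow, if_pos he]
      refine SemidirectProduct.ext ?_ rfl
      show ofAdd 0 = x.left
      rw [← hxl]
      rfl
    · have hx2 : kphi x.right g.left = (g.left)⁻¹ := kphi_apply_odd ho g.left
      rw [hx2] at hleft
      have hadd := congrArg toAdd hleft
      simp only [toAdd_mul, toAdd_inv] at hadd
      have hxl : toAdd x.left = toAdd g.left := by omega
      refine ⟨toAdd x.right, ?_⟩
      show tt (toAdd g.left) ^ (toAdd x.right) = x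
      rw [tt_zpow, if_neg (Int.not_even_iff_odd.mpr ho)]
      refine SemidirectProduct.ext ?_ rfl
      show ofAdd (toAdd g.left) = x.left
      rw [← hxl]
      rfl
  · rw [Subgroup.zpowers_le]
    rw [Subgroup.mem_centralizer_iff]
    rintro y rfl
    refine SemidirectProduct.ext ?_ (mz_comm _ _)
    show y.left * kphi y.right (tt (toAdd y.left)).left
      = (tt (toAdd y.left)).left * kphi (tt (toAdd y.left)).right y.left
    have h1 : kphi y.right (tt (toAdd y.left)).left = (tt (toAdd y.left)).left⁻¹ :=
      kphi_apply_odd h _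
    have h2 : kphi (tt (toAdd y.left)).right y.left = y.left⁻¹ :=
      kphi_apply_odd (by decide) _
    rw [h1, h2]
    show y.left * (ofAdd (toAdd y.left))⁻¹ = ofAdd (toAdd y.left) * y.left⁻¹
    rfl

def eOne : Multiplicative (Fin 1 → ℤ) ≃* Mz where
  toFun f := ofAdd (toAdd f 0)
  invFun z := ofAdd (fun _ => toAdd z)
  left_inv f := by
    apply toAdd.injective
    funext i
    have : i = 0 := Subsingleton.elim _ _
    rw [this]
    rfl
  right_inv z := rfl
  map_mul' a b := rfl

noncomputable def zpowersTT (x : ℤ) : ↥(Subgroup.zpowers (tt x)) ≃* Multiplicative (Fin 1 → ℤ) := by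
  have hinj : Function.Injective (zpowersHom K' (tt x)) := by
    intro m1 m2 hm
    have h1 := congrArg SemidirectProduct.right hm
    rw [zpowersHom_apply, zpowersHom_apply, tt_zpow, tt_zpow] at h1
    exact toAdd.injective (by exact h1)
  have hrange : (zpowersHom K' (tt x)).range = Subgroup.zpowers (tt x) := by
    ext y
    simp only [MonoidHom.mem_range, zpowersHom_apply, Subgroup.mem_zpowers_iff]
    exact ⟨fun ⟨m, hm⟩ => ⟨toAdd m, hm⟩, fun ⟨k, hk⟩ => ⟨ofAdd k, hk⟩⟩
  exact (((MonoidHom.ofInjective hinj).trans (MulEquiv.subgroupCongr hrange)).symm).trans eOne.symm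

lemma odd_mem_algA (g : K') (h : Odd (toAdd g.right)) : g ∈ algA K' 1 :=
  ⟨⊤, inferInstance, 1, le_rfl,
    ⟨(Subgroup.topEquiv.trans (MulEquiv.subgroupCongr (centralizer_odd g h))).trans
      (zpowersTT (toAdd g.left))⟩⟩

lemma coversK' : algCovers K' 1 := by
  classical
  refine ⟨{1, SemidirectProduct.inr (ofAdd 1)}, ?_⟩
  ext z
  simp only [Set.mem_univ, iff_true, Set.mem_iUnion, Finset.mem_insert, Finset.mem_singleton]
  rcases Int.even_or_odd (toAdd z.right) with he | ho
  · refine ⟨SemidirectProduct.inr (ofAdd 1), Or.inr rfl, ?_⟩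
    rw [Set.mem_smul_set_iff_inv_smul_mem]
    apply odd_mem_algA
    have hr : ((SemidirectProduct.inr (ofAdd (1:ℤ)) : K')⁻¹ • z).right
        = (ofAdd (1:ℤ))⁻¹ * z.right := by
      show ((SemidirectProduct.inr (ofAdd (1:ℤ)) : K')⁻¹ * z).right = _
      simp
    rw [hr]
    have : toAdd ((ofAdd (1:ℤ))⁻¹ * z.right) = -1 + toAdd z.right := rfl
    rw [this]
    rcases he with ⟨k, hk⟩
    exact ⟨k - 1, by omega⟩
  · exact ⟨1, Or.inl rfl, by simpa using odd_mem_algA z ho⟩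

/-- parity homomorphism -/
def hPar : K' →* Multiplicative (ZMod 2) :=
  (AddMonoidHom.toMultiplicative (Int.castAddHom (ZMod 2))).comp
    (SemidirectProduct.rightHom.comp (MonoidHom.id K'))

lemma mem_hPar_ker_iff (z : K') : z ∈ hPar.ker ↔ Even (toAdd z.right) := by
  rw [MonoidHom.mem_ker]
  show ofAdd ((toAdd z.right : ℤ) : ZMod 2) = 1 ↔ _
  rw [show (1 : Multiplicative (ZMod 2)) = ofAdd 0 from rfl]
  rw [Equiv.apply_eq_iff_eq]
  rw [ZMod.intCast_zmod_eq_zero_iff_dvd]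
  constructor
  · rintro ⟨c, hc⟩
    exact ⟨c, by omega⟩
  · rintro ⟨c, hc⟩
    exact ⟨c, by omega⟩

instance : Finite (Multiplicative (ZMod 2)) := inferInstanceAs (Finite (ZMod 2))

instance hPar_ker_finiteIndex : hPar.ker.FiniteIndex := by
  haveI : Finite (K' ⧸ hPar.ker) :=
    Finite.of_equiv _ (QuotientGroup.quotientKerEquivRange hPar).symm.toEquiv
  exact Subgroup.finiteIndex_of_finite_quotient

def rho : Multiplicative (Fin 2 → ℤ) →* K' where
  toFun w := ⟨ofAdd (toAdd w 0), ofAdd (2 * toAdd w 1)⟩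
  map_one' := by
    refine SemidirectProduct.ext rfl ?_
    show ofAdd (2 * toAdd (1 : Multiplicative (Fin 2 → ℤ)) 1) = 1
    norm_num
  map_mul' a b := by
    refine SemidirectProduct.ext ?_ ?_
    · show ofAdd (toAdd (a * b) 0) = ofAdd (toAdd a 0) * kphi (ofAdd (2 * toAdd a 1)) (ofAdd (toAdd b 0))
      rw [kphi_apply_even ⟨toAdd a 1, by ring⟩, ← ofAdd_add]
      rfl
    · show ofAdd (2 * toAdd (a * b) 1) = ofAdd (2 * toAdd a 1) * ofAdd (2 * toAdd b 1)
      rw [← ofAdd_add]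
      apply congrArg
      show 2 * (toAdd a 1 + toAdd b 1) = _
      ring

lemma rho_injective : Function.Injective rho := by
  intro a b h
  have h0 := congrArg (fun z => toAdd (SemidirectProduct.left z)) h
  have h1 := congrArg (fun z => toAdd (SemidirectProduct.right z)) h
  simp only [rho] at h0 h1
  apply toAdd.injective
  funext i
  fin_cases i
  · exact h0
  · show toAdd a 1 = toAdd b 1
    have : (2:ℤ) * toAdd a 1 = 2 * toAdd b 1 := h1
    omega

lemma rho_range : rho.range = hPar.ker := by
  ext z
  rw [mem_hPar_ker_iff, MonoidHom.mem_range]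
  constructor
  · rintro ⟨w, rfl⟩
    exact ⟨toAdd w 1, by show 2 * toAdd w 1 = _; ring⟩
  · rintro ⟨k, hk⟩
    refine ⟨ofAdd (fun i => if i = 0 then toAdd z.left else k), ?_⟩
    refine SemidirectProduct.ext ?_ ?_
    · show ofAdd (if (0 : Fin 2) = 0 then toAdd z.left else k) = z.left
      rw [if_pos rfl]
      rfl
    · show ofAdd (2 * (if (1 : Fin 2) = 0 then toAdd z.left else k)) = z.right
      rw [if_neg (by decide)]
      have : 2 * k = toAdd z.right := by omega
      rw [this]
      rfl

noncomputable def kerEquivZ2 : ↥(hPar.ker) ≃* Multiplicative (Fin 2 → ℤ) :=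
  ((MonoidHom.ofInjective rho_injective).trans (MulEquiv.subgroupCongr rho_range)).symm

namespace KB

def ka : KleinBottleGroup := PresentedGroup.of 0
def kb : KleinBottleGroup := PresentedGroup.of 1

lemma key : ka * kb * ka⁻¹ * kb = 1 := by
  have hmem : (FreeGroup.of 0 * FreeGroup.of 1 * (FreeGroup.of 0)⁻¹ * FreeGroup.of 1 :
      FreeGroup (Fin 2)) ∈ Subgroup.normalClosure kleinBottleRels :=
    Subgroup.subset_normalClosure rfl
  have : (PresentedGroup.mk kleinBottleRels)
      (FreeGroup.of 0 * FreeGroup.of 1 * (FreeGroup.of 0)⁻¹ * FreeGroup.of 1) = 1 := by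
    exact (QuotientGroup.eq_one_iff _).mpr hmem
  rw [map_mul, map_mul, map_mul, map_inv] at this
  exact this

lemma key2 : ka * kb * ka⁻¹ = kb⁻¹ := mul_eq_one_iff_eq_inv.mp key

lemma key3 : ka⁻¹ * kb * ka = kb⁻¹ := by
  have h : ka⁻¹ * kb⁻¹ * ka = kb := by
    rw [← key2]
    group
  calc ka⁻¹ * kb * ka = (ka⁻¹ * kb⁻¹ * ka)⁻¹ := by group
    _ = kb⁻¹ := by rw [h]

lemma conj_pow (m : ℤ) : ka ^ m * kb * (ka ^ m)⁻¹ = if Even m then kb else kb⁻¹ := by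
  induction m using Int.induction_on with
  | zero => simp
  | succ n ih =>
    have step : ka ^ ((n:ℤ)+1) * kb * (ka ^ ((n:ℤ)+1))⁻¹
        = ka * (ka ^ (n:ℤ) * kb * (ka ^ (n:ℤ))⁻¹) * ka⁻¹ := by group
    rw [step, ih]
    rcases Int.even_or_odd (n:ℤ) with he | ho
    · rw [if_pos he, if_neg (by rw [Int.even_add_one, not_not]; exact he), key2]
    · have h0 : ¬ Even (n:ℤ) := Int.not_even_iff_odd.mpr ho
      rw [if_neg h0, if_pos (Int.even_add_one.mpr h0)]
      calc ka * kb⁻¹ * ka⁻¹ = (ka * kb * ka⁻¹)⁻¹ := by group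
        _ = kb := by rw [key2]; group
  | pred n ih =>
    have step : ka ^ (-(n:ℤ)-1) * kb * (ka ^ (-(n:ℤ)-1))⁻¹
        = ka⁻¹ * (ka ^ (-(n:ℤ)) * kb * (ka ^ (-(n:ℤ)))⁻¹) * ka := by group
    rw [step, ih]
    rcases Int.even_or_odd (-(n:ℤ)) with he | ho
    · rw [if_pos he, if_neg (by rw [Int.even_sub_one]; simpa using he), key3]
    · have h0 : ¬ Even (-(n:ℤ)) := Int.not_even_iff_odd.mpr ho
      rw [if_neg h0, if_pos (Int.even_sub_one.mpr h0)]
      calc ka⁻¹ * kb⁻¹ * ka = (ka⁻¹ * kb * ka)⁻¹ := by group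
        _ = kb := by rw [key3]; group

def toK : K' →* KleinBottleGroup :=
  SemidirectProduct.lift (zpowersHom _ kb) (zpowersHom _ ka) (by
    intro g
    apply MonoidHom.ext_mint
    show zpowersHom _ kb (kphi g (ofAdd 1)) = MulAut.conj (ka ^ toAdd g) (kb ^ (1:ℤ))
    rw [zpow_one]
    rcases Int.even_or_odd (toAdd g) with he | ho
    · have h1 : kphi g (ofAdd 1) = ofAdd 1 := kphi_apply_even he _
      rw [h1]
      show kb ^ (1:ℤ) = ka ^ toAdd g * kb * (ka ^ toAdd g)⁻¹
      rw [zpow_one, conj_pow, if_pos he]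
    · have h1 : kphi g (ofAdd 1) = (ofAdd 1)⁻¹ := kphi_apply_odd ho _
      rw [h1]
      show kb ^ (toAdd (ofAdd (1:ℤ))⁻¹) = ka ^ toAdd g * kb * (ka ^ toAdd g)⁻¹
      rw [conj_pow, if_neg (Int.not_even_iff_odd.mpr ho)]
      show kb ^ (-1 : ℤ) = kb⁻¹
      group)

lemma odd_one : Odd (1:ℤ) := ⟨0, by ring⟩

lemma relAB : (SemidirectProduct.inr (ofAdd 1) * SemidirectProduct.inl (ofAdd 1)
    * (SemidirectProduct.inr (ofAdd 1))⁻¹ * SemidirectProduct.inl (ofAdd 1) : K') = 1 := by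
  have e1 : (SemidirectProduct.inr (ofAdd 1) * SemidirectProduct.inl (ofAdd 1) : K')
      = ⟨ofAdd (-1), ofAdd 1⟩ := by
    refine SemidirectProduct.ext ?_ ?_
    · show (1 : Multiplicative ℤ) * kphi (ofAdd 1) (ofAdd 1) = ofAdd (-1)
      rw [one_mul, kphi_apply_odd odd_one]
      rfl
    · show ofAdd (1:ℤ) * 1 = ofAdd (1:ℤ)
      rw [mul_one]
  have e2 : ((SemidirectProduct.inr (ofAdd 1))⁻¹ : K') = ⟨1, ofAdd (-1)⟩ := by
    refine SemidirectProduct.ext ?_ rfl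
    · show kphi (ofAdd (1:ℤ))⁻¹ (1 : Multiplicative ℤ)⁻¹ = 1
      rw [inv_one, map_one]
  have e3 : (⟨ofAdd (-1), ofAdd 1⟩ * ⟨1, ofAdd (-1)⟩ : K') = ⟨ofAdd (-1), 1⟩ := by
    refine SemidirectProduct.ext ?_ ?_
    · show ofAdd (-1:ℤ) * kphi (ofAdd 1) 1 = ofAdd (-1:ℤ)
      rw [map_one, mul_one]
    · show ofAdd (1:ℤ) * ofAdd (-1:ℤ) = 1
      rw [← ofAdd_add]
      norm_num
  have e4 : (⟨ofAdd (-1), 1⟩ * SemidirectProduct.inl (ofAdd 1) : K') = 1 := by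
    refine SemidirectProduct.ext ?_ ?_
    · show ofAdd (-1:ℤ) * kphi 1 (ofAdd 1) = 1
      rw [show (1 : Multiplicative ℤ) = ofAdd (0:ℤ) from rfl, kphi_apply_even Even.zero,
        ← ofAdd_add]
      norm_num
    · show (1 : Multiplicative ℤ) * 1 = 1
      rw [mul_one]
  rw [e1, e2, e3, e4]

def kf : Fin 2 → K' := fun i =>
  if i = 0 then SemidirectProduct.inr (ofAdd 1) else SemidirectProduct.inl (ofAdd 1)

lemma kf0 : kf 0 = SemidirectProduct.inr (ofAdd 1) := rfl
lemma kf1 : kf 1 = SemidirectProduct.inl (ofAdd 1) := rfl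

lemma kf_rels : ∀ r ∈ kleinBottleRels, FreeGroup.lift kf r = 1 := by
  intro r hr
  rw [kleinBottleRels, Set.mem_singleton_iff] at hr
  subst hr
  rw [map_mul, map_mul, map_mul, map_inv, FreeGroup.lift_apply_of, FreeGroup.lift_apply_of,
    kf0, kf1]
  exact relAB

def toK' : KleinBottleGroup →* K' := PresentedGroup.toGroup kf_rels


lemma toK_inl_one : toK (SemidirectProduct.inl (ofAdd 1)) = kb := by
  rw [toK, SemidirectProduct.lift_inl, zpowersHom_apply, toAdd_ofAdd, zpow_one]

lemma toK_inr_one : toK (SemidirectProduct.inr (ofAdd 1)) = ka := by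
  rw [toK, SemidirectProduct.lift_inr, zpowersHom_apply, toAdd_ofAdd, zpow_one]

lemma toK'_kb : toK' kb = SemidirectProduct.inl (ofAdd 1) :=
  PresentedGroup.toGroup.of kf_rels

lemma toK'_ka : toK' ka = SemidirectProduct.inr (ofAdd 1) :=
  PresentedGroup.toGroup.of kf_rels

lemma comp1 : toK'.comp toK = MonoidHom.id K' := by
  apply SemidirectProduct.hom_ext
  · apply MonoidHom.ext_mint
    show toK' (toK (SemidirectProduct.inl (ofAdd 1))) = SemidirectProduct.inl (ofAdd 1)
    rw [toK_inl_one, toK'_kb]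
  · apply MonoidHom.ext_mint
    show toK' (toK (SemidirectProduct.inr (ofAdd 1))) = SemidirectProduct.inr (ofAdd 1)
    rw [toK_inr_one, toK'_ka]

lemma comp2 : toK.comp toK' = MonoidHom.id KleinBottleGroup := by
  apply PresentedGroup.ext
  intro x
  fin_cases x
  · show toK (toK' ka) = ka
    rw [toK'_ka, toK_inr_one]
  · show toK (toK' kb) = kb
    rw [toK'_kb, toK_inl_one]

def eK : KleinBottleGroup ≃* K' := MonoidHom.toMulEquiv toK' toK comp2 comp1

end KB


/-- For the Klein bottle group `G`, `r(G) ≤ 1` and `rank(G) = 2`;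
in particular `r(G) < rank(G)`. -/
theorem stmt_4 :
    algr KleinBottleGroup ≤ 1 ∧ algRank KleinBottleGroup = 2 ∧
      algr KleinBottleGroup < algRank KleinBottleGroup := by
  have coversK : algCovers KleinBottleGroup 1 := algCovers_of_equiv KB.eK.symm coversK'
  have h1 : algr KleinBottleGroup ≤ 1 := sInf_le ⟨1, by norm_num, coversK⟩
  set BK : Subgroup KleinBottleGroup := (hPar.comp KB.eK.toMonoidHom).ker with hBK
  haveI hBKfin : BK.FiniteIndex := by
    haveI : Finite (KleinBottleGroup ⧸ BK) :=
      Finite.of_equiv _ (QuotientGroup.quotientKerEquivRange _).symm.toEquiv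
    exact Subgroup.finiteIndex_of_finite_quotient
  have eBK : ↥BK ≃* Multiplicative (Fin 2 → ℤ) := (kerCompEquiv KB.eK hPar).trans kerEquivZ2
  have h2 : algRank KleinBottleGroup = 2 := by
    apply le_antisymm
    · refine iSup₂_le fun H hH => ?_
      haveI := hH
      exact algr_le_two (BK.subgroupOf H) (eBK.toMonoidHom.comp (subgroupOfHom BK H))
        (eBK.injective.comp (subgroupOfHom_injective BK H))
    · have h3 := algr_eq_two eBK
      calc (2:ℕ∞) = algr ↥BK := h3.symm
        _ ≤ algRank KleinBottleGroup :=
          le_iSup₂ (f := fun (H : Subgroup KleinBottleGroup) (_ : H.FiniteIndex) => algr ↥H)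
            BK hBKfin
  refine ⟨h1, h2, lt_of_le_of_lt h1 ?_⟩
  rw [h2]
  norm_num
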